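/- Let 𝒜_1, 𝒜_2 be quasi-orthogonal unital *-subalgebras of M_n(ℂ) and ℬ a unital *-subalgebra with ℬ ⊆ 𝒜_1 + 𝒜_2 (as a linear subspace). Then either ℬ ⊆ 𝒜_1, or ℬ ⊆ 𝒜_2, or ℬ ∩ 𝒜_1 = ℬ ∩ 𝒜_2 = ℂ·1. -/
import Mathlib


open Matrix BigOperators

noncomputable section

abbrev Mat (n : ℕ) := Matrix (Fin n) (Fin n) ℂ

/-- Two unital *-subalgebras of `M_n(ℂ)` are quasi-orthogonal iff
`τ(AB) = τ(A)τ(B)` for all members, where `τ = (1/n)Tr`. -/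
def QuasiOrth {n : ℕ} (𝒜 ℬ : StarSubalgebra ℂ (Mat n)) : Prop :=
  ∀ A ∈ 𝒜, ∀ B ∈ ℬ, (n : ℂ) * (A * B).trace = A.trace * B.trace

/-- If `Tr(AᴴA) = 0` then `A = 0`. -/
lemma trace_star_mul_self_eq_zero' {n : ℕ} {A : Mat n} (h : (Aᴴ * A).trace = 0) : A = 0 := by
  have key : (Aᴴ * A).trace = ((∑ i, ∑ j, Complex.normSq (A j i) : ℝ) : ℂ) := by
    simp only [trace, diag, mul_apply, conjTranspose_apply]
    push_cast
    refine Finset.sum_congr rfl fun i _ => Finset.sum_congr rfl fun j _ => ?_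
    rw [Complex.normSq_eq_conj_mul_self]; rfl
  rw [key] at h
  norm_cast at h
  have h2 := (Finset.sum_eq_zero_iff_of_nonneg (fun i _ =>
    Finset.sum_nonneg fun j _ => Complex.normSq_nonneg _)).mp h
  ext j i
  have := (Finset.sum_eq_zero_iff_of_nonneg (fun j _ =>
    Complex.normSq_nonneg _)).mp (h2 i (Finset.mem_univ i)) j (Finset.mem_univ j)
  simpa using Complex.normSq_eq_zero.mp this

/-- Key lemma: if `ℬ ∩ 𝒜₁` contains a nonzero traceless element, then `ℬ ⊆ 𝒜₁`. -/
lemma key_lemma {n : ℕ} (hn : (n : ℂ) ≠ 0) (𝒜₁ 𝒜₂ ℬ : StarSubalgebra ℂ (Mat n))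
    (h : QuasiOrth 𝒜₁ 𝒜₂)
    (hsub : Subalgebra.toSubmodule ℬ.toSubalgebra ≤
      Subalgebra.toSubmodule 𝒜₁.toSubalgebra ⊔ Subalgebra.toSubmodule 𝒜₂.toSubalgebra)
    (x : Mat n) (hxB : x ∈ ℬ) (hxA : x ∈ 𝒜₁) (hxt : x.trace = 0) (hx0 : x ≠ 0)
    (b : Mat n) (hb : b ∈ ℬ) : b ∈ 𝒜₁ := by
  obtain ⟨a₁, ha₁, a₂, ha₂, hsum⟩ := Submodule.mem_sup.mp (hsub hb)
  rw [Subalgebra.mem_toSubmodule] at ha₁ ha₂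
  have hxAs : xᴴ ∈ 𝒜₁ := star_mem hxA
  -- normalize a₂ to be traceless
  set c : ℂ := a₂.trace / n with hc
  set a₂' : Mat n := a₂ - c • 1 with ha₂'def
  have ha₂' : a₂' ∈ 𝒜₂ := sub_mem ha₂ (SMulMemClass.smul_mem c (one_mem 𝒜₂))
  have ha₂'s : a₂'ᴴ ∈ 𝒜₂ := star_mem ha₂'
  have ha₁' : a₁ + c • 1 ∈ 𝒜₁ := add_mem ha₁ (SMulMemClass.smul_mem c (one_mem 𝒜₁))
  have hb' : b = (a₁ + c • 1) + a₂' := by rw [ha₂'def, ← hsum]; abel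
  have ht1 : (1 : Mat n).trace = (n : ℂ) := by simp [trace_one]
  have ha₂t : a₂'.trace = 0 := by
    simp [ha₂'def, trace_sub, trace_smul, hc, ht1, div_mul_cancel₀ _ hn]
  have ha₂ts : (a₂'ᴴ).trace = 0 := by rw [trace_conjTranspose, ha₂t, star_zero]
  have hxts : (xᴴ).trace = 0 := by rw [trace_conjTranspose, hxt, star_zero]
  -- x * a₂' ∈ 𝒜₁ ⊔ 𝒜₂
  have hxa₂ : x * a₂' ∈ Subalgebra.toSubmodule 𝒜₁.toSubalgebra ⊔ Subalgebra.toSubmodule 𝒜₂.toSubalgebra := by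
    have h1 : x * a₂' = x * b - x * (a₁ + c • 1) := by rw [hb', mul_add]; abel
    rw [h1]
    have hxb : x * b ∈ ℬ := mul_mem hxB hb
    have m1 : x * (a₁ + c • 1) ∈ 𝒜₁ := mul_mem hxA ha₁'
    exact sub_mem (hsub hxb) (Submodule.mem_sup_left ((Subalgebra.mem_toSubmodule _).mpr m1))
  obtain ⟨d₁, hd₁, d₂, hd₂, hdsum⟩ := Submodule.mem_sup.mp hxa₂
  rw [Subalgebra.mem_toSubmodule] at hd₁ hd₂
  -- trace ((x*a₂')ᴴ * (x*a₂')) = 0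
  have hmain : ((x * a₂')ᴴ * (x * a₂')).trace = 0 := by
    have t1 : ((x * a₂')ᴴ * d₁).trace = 0 := by
      have e : (x * a₂')ᴴ * d₁ = a₂'ᴴ * (xᴴ * d₁) := by
        rw [conjTranspose_mul, mul_assoc]
      rw [e, trace_mul_comm]
      have hq := h _ (mul_mem hxAs hd₁) _ ha₂'s
      rw [ha₂ts, mul_zero] at hq
      exact (mul_eq_zero.mp hq).resolve_left hn
    have t2 : ((x * a₂')ᴴ * d₂).trace = 0 := by
      have e : ((x * a₂')ᴴ * d₂).trace = (xᴴ * (d₂ * a₂'ᴴ)).trace := by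
        rw [conjTranspose_mul, mul_assoc, trace_mul_comm, mul_assoc]
      rw [e]
      have hq := h _ hxAs _ (mul_mem hd₂ ha₂'s)
      rw [hxts, zero_mul] at hq
      exact (mul_eq_zero.mp hq).resolve_left hn
    calc ((x * a₂')ᴴ * (x * a₂')).trace = ((x * a₂')ᴴ * (d₁ + d₂)).trace := by rw [hdsum]
    _ = ((x * a₂')ᴴ * d₁).trace + ((x * a₂')ᴴ * d₂).trace := by rw [mul_add, trace_add]
    _ = 0 := by rw [t1, t2, add_zero]
  -- hence a₂' = 0
  have h0 : x * a₂' = 0 := trace_star_mul_self_eq_zero' hmain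
  have hx2 : (xᴴ * x * (a₂' * a₂'ᴴ)).trace = 0 := by
    have e : xᴴ * x * (a₂' * a₂'ᴴ) = xᴴ * (x * a₂' * a₂'ᴴ) := by
      rw [mul_assoc, mul_assoc]
    rw [e, h0]; simp
  have hq := h _ (mul_mem hxAs hxA) _ (mul_mem ha₂' ha₂'s)
  rw [hx2, mul_zero] at hq
  have hxtr : (xᴴ * x).trace ≠ 0 := fun h0 => hx0 (trace_star_mul_self_eq_zero' h0)
  have htr0 : (a₂' * a₂'ᴴ).trace = 0 :=
    (mul_eq_zero.mp hq.symm).resolve_left hxtr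
  have hs0 : a₂'ᴴ = 0 := trace_star_mul_self_eq_zero' (by rwa [conjTranspose_conjTranspose])
  have ha20 : a₂' = 0 := by
    have := congrArg conjTranspose hs0
    simpa using this
  rw [hb', ha20, add_zero]
  exact ha₁'

/-- If `ℬ ∩ 𝒜₁` contains a non-scalar element, then `ℬ ⊆ 𝒜₁`. -/
lemma key2 {n : ℕ} (hn : (n : ℂ) ≠ 0) (𝒜₁ 𝒜₂ ℬ : StarSubalgebra ℂ (Mat n))
    (h : QuasiOrth 𝒜₁ 𝒜₂)
    (hsub : Subalgebra.toSubmodule ℬ.toSubalgebra ≤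
      Subalgebra.toSubmodule 𝒜₁.toSubalgebra ⊔ Subalgebra.toSubmodule 𝒜₂.toSubalgebra)
    (hne : ¬ (∀ x, x ∈ ℬ → x ∈ 𝒜₁ → ∃ c : ℂ, x = c • (1 : Mat n))) :
    ∀ b ∈ ℬ, b ∈ 𝒜₁ := by
  push_neg at hne
  obtain ⟨x, hxB, hxA, hxns⟩ := hne
  set x₀ : Mat n := x - (x.trace / n) • 1 with hx₀def
  have ht1 : (1 : Mat n).trace = (n : ℂ) := by simp [trace_one]
  have hx₀t : x₀.trace = 0 := by
    simp [hx₀def, trace_sub, trace_smul, ht1, div_mul_cancel₀ _ hn]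
  have hx₀0 : x₀ ≠ 0 := by
    intro h0
    exact hxns (x.trace / n) (by rw [← sub_eq_zero]; exact h0)
  exact key_lemma hn 𝒜₁ 𝒜₂ ℬ h hsub x₀
    (sub_mem hxB (SMulMemClass.smul_mem _ (one_mem ℬ)))
    (sub_mem hxA (SMulMemClass.smul_mem _ (one_mem 𝒜₁))) hx₀t hx₀0

/-- if `ℬ ⊆ 𝒜₁ + 𝒜₂` for quasi-orthogonal `𝒜₁, 𝒜₂`, then
`ℬ ⊆ 𝒜₁`, or `ℬ ⊆ 𝒜₂`, or `ℬ ∩ 𝒜₁ = ℬ ∩ 𝒜₂ = ℂ·1`. -/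
theorem stmt11 {n : ℕ} (𝒜₁ 𝒜₂ ℬ : StarSubalgebra ℂ (Mat n))
    (h : QuasiOrth 𝒜₁ 𝒜₂)
    (hsub : Subalgebra.toSubmodule ℬ.toSubalgebra ≤
      Subalgebra.toSubmodule 𝒜₁.toSubalgebra ⊔ Subalgebra.toSubmodule 𝒜₂.toSubalgebra) :
    (∀ b ∈ ℬ, b ∈ 𝒜₁) ∨ (∀ b ∈ ℬ, b ∈ 𝒜₂) ∨
    ((∀ x, x ∈ ℬ → x ∈ 𝒜₁ → ∃ c : ℂ, x = c • (1 : Mat n)) ∧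
     (∀ x, x ∈ ℬ → x ∈ 𝒜₂ → ∃ c : ℂ, x = c • (1 : Mat n))) := by
  rcases Nat.eq_zero_or_pos n with hn0 | hn0
  · left
    intro b _
    subst hn0
    have : b = 0 := Subsingleton.elim _ _
    rw [this]; exact zero_mem 𝒜₁
  have hn : (n : ℂ) ≠ 0 := Nat.cast_ne_zero.mpr hn0.ne'
  by_cases h1 : ∀ x, x ∈ ℬ → x ∈ 𝒜₁ → ∃ c : ℂ, x = c • (1 : Mat n)
  · by_cases h2 : ∀ x, x ∈ ℬ → x ∈ 𝒜₂ → ∃ c : ℂ, x = c • (1 : Mat n)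
    · exact Or.inr (Or.inr ⟨h1, h2⟩)
    · have h' : QuasiOrth 𝒜₂ 𝒜₁ := fun A hA B hB => by
        rw [trace_mul_comm, mul_comm (trace A)]; exact h B hB A hA
      have hsub' := hsub.trans (le_of_eq (sup_comm _ _))
      exact Or.inr (Or.inl (key2 hn 𝒜₂ 𝒜₁ ℬ h' hsub' h2))
  · exact Or.inl (key2 hn 𝒜₁ 𝒜₂ ℬ h hsub h1)
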